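/- Let T ⊆ S be k-algebras with S finitely generated as a left or right T-module. Then S and T are growth equivalent: for every finite subset of either algebra there is a finite subset of the other dominating its growth function up to a multiplicative constant. In particular, GKdim S = GKdim T. -/

import Mathlib

open scoped ENNReal

open scoped NNReal

/-- The `k`-span of all products of at most `n` elements of `X`. -/
def wordSpan (k : Type*) [Field k] (S : Type*) [Ring S] [Algebra k S]
    (X : Set S) (n : ℕ) : Submodule k S :=
  Submodule.span k {x | ∃ l : List S, l.length ≤ n ∧ (∀ a ∈ l, a ∈ X) ∧ l.prod = x}

/-- The growth function `n ↦ dim_k 𝒳⁽ⁿ⁾` of a finite subset of an algebra. -/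
noncomputable def growthFn (k : Type*) [Field k] (S : Type*) [Ring S] [Algebra k S]
    (X : Finset S) (n : ℕ) : ℕ :=
  Module.finrank k (wordSpan k S (X : Set S) n)

/-- The growth relation `S ⪯ T`. -/
def growthLE (k : Type*) [Field k] (S T : Type*) [Ring S] [Algebra k S]
    [Ring T] [Algebra k T] : Prop :=
  ∀ X : Finset S, ∃ (Y : Finset T) (K : ℕ), 0 < K ∧
    ∀ n : ℕ, growthFn k S X n ≤ K * growthFn k T Y n

/-- Growth equivalence `S ≡ T`. -/
def growthEquiv (k : Type*) [Field k] (S T : Type*) [Ring S] [Algebra k S]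
    [Ring T] [Algebra k T] : Prop :=
  growthLE k S T ∧ growthLE k T S

/-- The Gelfand–Kirillov dimension of a `k`-algebra. -/
noncomputable def gkDim (k : Type*) [Field k] (S : Type*) [Ring S] [Algebra k S] : ℝ≥0∞ :=
  ⨆ X : Finset S, Filter.limsup
    (fun n : ℕ => ENNReal.ofReal (Real.log (growthFn k S X n) / Real.log n)) Filter.atTop

section Prelim

variable (k : Type*) [Field k] {S : Type*} [Ring S] [Algebra k S]

lemma wordSet_finite (X : Finset S) (n : ℕ) :
    {x : S | ∃ l : List S, l.length ≤ n ∧ (∀ a ∈ l, a ∈ (X : Set S)) ∧ l.prod = x}.Finite := by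
  have h : {x : S | ∃ l : List S, l.length ≤ n ∧ (∀ a ∈ l, a ∈ (X : Set S)) ∧ l.prod = x}
      ⊆ (fun l : List (X : Set S) => (l.map Subtype.val).prod) ''
        {l : List (X : Set S) | l.length ≤ n} := by
    rintro x ⟨l, hl, hX, rfl⟩
    refine ⟨l.pmap Subtype.mk hX, by simpa using hl, ?_⟩
    simp [List.map_pmap]
  exact (List.finite_length_le _ n).image _ |>.subset h

lemma wordSpan_fd (X : Finset S) (n : ℕ) :
    FiniteDimensional k (wordSpan k S (X : Set S) n) :=
  FiniteDimensional.span_of_finite k (wordSet_finite X n)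

lemma wordSpan_mono (X : Set S) {m n : ℕ} (h : m ≤ n) :
    wordSpan k S X m ≤ wordSpan k S X n :=
  Submodule.span_mono fun _x ⟨l, hl, hX, hp⟩ => ⟨l, hl.trans h, hX, hp⟩

lemma one_mem_wordSpan (X : Set S) (n : ℕ) : (1 : S) ∈ wordSpan k S X n :=
  Submodule.subset_span ⟨[], by simp, by simp, rfl⟩

lemma mul_mem_wordSpan {X : Set S} {x t : S} {n : ℕ} (hx : x ∈ X)
    (ht : t ∈ wordSpan k S X n) : x * t ∈ wordSpan k S X (n + 1) := by
  induction ht using Submodule.span_induction with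
  | mem a ha =>
    obtain ⟨l, hl, hX, rfl⟩ := ha
    exact Submodule.subset_span ⟨x :: l, by simpa using hl, by
      intro a ha; rcases List.mem_cons.1 ha with h | h
      · exact h ▸ hx
      · exact hX a h, by simp⟩
  | zero => simp
  | add a b _ _ ha hb => rw [mul_add]; exact add_mem ha hb
  | smul c a _ ha => rw [mul_smul_comm]; exact Submodule.smul_mem _ c ha

lemma finrank_finset_sup_le {ι : Type*} (s : Finset ι) (p : ι → Submodule k S)
    [∀ i, FiniteDimensional k (p i)] :
    Module.finrank k ↥(s.sup p) ≤ ∑ i ∈ s, Module.finrank k (p i) := by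
  classical
  induction s using Finset.induction with
  | empty => simp [finrank_bot k S]
  | insert a s ha ih =>
    rw [Finset.sup_insert, Finset.sum_insert ha]
    exact (Submodule.finrank_add_le_finrank_add_finrank _ _).trans (by omega)

lemma finrank_iSup_le {ι : Type*} [Fintype ι] (p : ι → Submodule k S)
    [∀ i, FiniteDimensional k (p i)] :
    Module.finrank k ↥(⨆ i, p i) ≤ ∑ i, Module.finrank k (p i) := by
  rw [← Finset.sup_univ_eq_iSup]
  exact finrank_finset_sup_le k Finset.univ p

end Prelim

section Main

variable {k : Type*} [Field k] {S : Type*} [Ring S] [Algebra k S]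

/-- The easy direction: `T ⪯ S`. -/
lemma growthLE_of_subalgebra (T : Subalgebra k S) : growthLE k T S := by
  classical
  intro Y
  refine ⟨Y.image (Subtype.val), 1, one_pos, fun n => ?_⟩
  haveI := wordSpan_fd k (Y.image (Subtype.val : T → S)) n
  have hinj : Function.Injective (T.val.toLinearMap : T →ₗ[k] S) := Subtype.val_injective
  have hmap : (wordSpan k T (Y : Set T) n).map T.val.toLinearMap
      ≤ wordSpan k S ((Y.image Subtype.val : Finset S) : Set S) n := by
    rw [wordSpan, Submodule.map_span]
    apply Submodule.span_le.2
    rintro _ ⟨t, ⟨l, hl, hY, rfl⟩, rfl⟩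
    refine Submodule.subset_span ⟨l.map Subtype.val, by simpa using hl, ?_, ?_⟩
    · intro a ha
      obtain ⟨b, hb, rfl⟩ := List.mem_map.1 ha
      exact Finset.mem_coe.2 (Finset.mem_image_of_mem _ (hY b hb))
    · exact (map_list_prod T.val l).symm
  rw [one_mul]
  calc growthFn k T Y n
      = Module.finrank k ((wordSpan k T (Y : Set T) n).map T.val.toLinearMap) :=
        LinearEquiv.finrank_eq (Submodule.equivMapOfInjective _ hinj _)
    _ ≤ growthFn k S (Y.image Subtype.val) n := Submodule.finrank_mono hmap

/-- The hard direction: `S ⪯ T` when `S` is module-finite over `T`. -/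
lemma growthLE_of_moduleFinite (T : Subalgebra k S) (hfin : Module.Finite T S) :
    growthLE k S T := by
  classical
  intro X
  obtain ⟨E₀, hE₀⟩ := Module.finite_def.mp hfin
  set E : Finset S := insert 1 E₀ with hE
  have hspan : Submodule.span T (E : Set S) = ⊤ := by
    rw [eq_top_iff, ← hE₀]
    exact Submodule.span_mono (by simp [hE])
  have hco : ∀ e x : S, ∃ f : S → T, ∑ i ∈ E, f i • i = e * x := fun e x =>
    (Submodule.mem_span_finset.1 (by rw [hspan]; exact Submodule.mem_top)).imp fun _ h => h.2
  choose c hc using hco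
  set Y : Finset T := (E ×ˢ X ×ˢ E).image (fun p => c p.1 p.2.1 p.2.2) with hY
  have hcY : ∀ e ∈ E, ∀ x ∈ X, ∀ e' ∈ E, c e x e' ∈ Y := by
    intro e he x hx e' he'
    exact Finset.mem_image.2 ⟨⟨e, x, e'⟩, by simp [he, hx, he'], rfl⟩
  set φ : S → (T →ₗ[k] S) := fun e => (LinearMap.mulRight k e).comp T.val.toLinearMap with hφ
  set W : ℕ → Submodule k S :=
    fun n => ⨆ e : E, Submodule.map (φ (e : S)) (wordSpan k T (Y : Set T) n) with hW
  have hφ_apply : ∀ (e : S) (t : T), φ e t = (t : S) * e := fun e t => rfl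
  have hsmul : ∀ (t : T) (s : S), t • s = (t : S) * s := fun t s => rfl
  -- multiplication by an element of Y raises the level by one
  have hmulY : ∀ (n : ℕ) (t₀ : T), t₀ ∈ Y → ∀ w ∈ W n, (t₀ : S) * w ∈ W (n + 1) := by
    intro n t₀ ht₀ w hw
    refine Submodule.iSup_induction _ (motive := fun w => (t₀ : S) * w ∈ W (n + 1)) hw ?_ ?_ ?_
    · rintro e w hw
      obtain ⟨t, ht, rfl⟩ := hw
      have : (t₀ : S) * φ (e : S) t = φ (e : S) (t₀ * t) := by
        rw [hφ_apply, hφ_apply, ← mul_assoc]; norm_cast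
      rw [this]
      exact le_iSup (fun e : E => Submodule.map (φ (e : S)) (wordSpan k T (Y : Set T) (n+1))) e
        ⟨t₀ * t, mul_mem_wordSpan k ht₀ ht, rfl⟩
    · simp
    · intro a b ha hb
      rw [mul_add]; exact add_mem ha hb
  have hone : (1 : S) ∈ E := Finset.mem_insert_self 1 E₀
  -- the main claim
  have hmain : ∀ l : List S, (∀ a ∈ l, a ∈ (X : Set S)) → ∀ e ∈ E,
      e * l.prod ∈ W l.length := by
    intro l
    induction l with
    | nil =>
      intro _ e he
      have h1 : e = φ e 1 := by rw [hφ_apply]; simp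
      rw [List.prod_nil, mul_one, h1]
      exact le_iSup (fun e : E => Submodule.map (φ (e : S)) (wordSpan k T (Y : Set T) 0))
        ⟨e, he⟩ ⟨1, one_mem_wordSpan k _ 0, rfl⟩
    | cons x l ih =>
      intro hX e he
      have hx : x ∈ X := hX x List.mem_cons_self
      have hXl : ∀ a ∈ l, a ∈ (X : Set S) := fun a ha => hX a (List.mem_cons_of_mem x ha)
      have key : e * (x :: l).prod = ∑ i ∈ E, (c e x i : S) * (i * l.prod) := by
        rw [List.prod_cons, ← mul_assoc, ← hc e x, Finset.sum_mul]
        congr 1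
        ext i
        rw [hsmul, mul_assoc]
      rw [key, List.length_cons]
      refine Submodule.sum_mem _ fun i hi => ?_
      exact hmulY l.length (c e x i) (hcY e he x hx i hi) _ (ih hXl i hi)
  -- conclude
  refine ⟨Y, E.card, Finset.card_pos.2 ⟨1, hone⟩, fun n => ?_⟩
  haveI := wordSpan_fd k Y n
  have hle : wordSpan k S (X : Set S) n ≤ W n := by
    apply Submodule.span_le.2
    rintro _ ⟨l, hl, hX, rfl⟩
    have := hmain l hX 1 hone
    rw [one_mul] at this
    exact (iSup_mono fun e => Submodule.map_mono (wordSpan_mono k _ hl)) this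
  haveI : ∀ e : E, FiniteDimensional k
      (Submodule.map (φ (e : S)) (wordSpan k T (Y : Set T) n)) := fun e =>
    Module.Finite.map _ _
  haveI : FiniteDimensional k (W n) := by
    rw [hW]; infer_instance
  calc growthFn k S X n ≤ Module.finrank k (W n) := Submodule.finrank_mono hle
    _ ≤ ∑ _e : E, Module.finrank k (wordSpan k T (Y : Set T) n) := by
        refine (finrank_iSup_le k _).trans (Finset.sum_le_sum fun e _ => ?_)
        exact Submodule.finrank_map_le _ _
    _ = E.card * growthFn k T Y n := by
        rw [Finset.sum_const, Finset.card_univ, Fintype.card_coe, smul_eq_mul]; rfl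

end Main

section GK

variable {k : Type*} [Field k] {S T : Type*} [Ring S] [Algebra k S] [Ring T] [Algebra k T]

lemma gkDim_le_of_growthLE (h : growthLE k S T) : gkDim k S ≤ gkDim k T := by
  refine iSup_le fun X => ?_
  obtain ⟨Y, K, hK, hb⟩ := h X
  refine le_trans ?_ (le_iSup _ Y)
  set u := fun n : ℕ => ENNReal.ofReal (Real.log (growthFn k S X n) / Real.log n) with hu
  set v := fun n : ℕ => ENNReal.ofReal (Real.log (growthFn k T Y n) / Real.log n) with hv
  set w := fun n : ℕ => ENNReal.ofReal (Real.log K / Real.log n) with hwdef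
  have hw0 : Filter.Tendsto w Filter.atTop (nhds 0) := by
    have h1 : Filter.Tendsto (fun n : ℕ => Real.log K / Real.log n) Filter.atTop (nhds 0) := by
      simp only [div_eq_mul_inv]
      simpa using ((Real.tendsto_log_atTop.comp
        tendsto_natCast_atTop_atTop).inv_tendsto_atTop).const_mul (Real.log K)
    have h2 := (ENNReal.continuous_ofReal.tendsto 0).comp h1
    rw [ENNReal.ofReal_zero] at h2
    exact h2
  have hev : ∀ᶠ n in Filter.atTop, u n ≤ w n + v n := by
    filter_upwards [Filter.eventually_ge_atTop 2] with n hn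
    have hlogn : 0 < Real.log n := Real.log_pos (by exact_mod_cast hn)
    rcases Nat.eq_zero_or_pos (growthFn k S X n) with ha | ha
    · simp [hu, ha]
    · have hKb : (1 : ℕ) ≤ K * growthFn k T Y n := le_trans ha (hb n)
      have hbpos : 0 < growthFn k T Y n :=
        Nat.pos_of_ne_zero fun h0 => by simp [h0] at hKb
      have hlog : Real.log (growthFn k S X n) ≤ Real.log K + Real.log (growthFn k T Y n) := by
        have h1 : Real.log (growthFn k S X n) ≤ Real.log (K * growthFn k T Y n : ℕ) :=
          Real.log_le_log (by exact_mod_cast ha) (by exact_mod_cast hb n)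
        rwa [Nat.cast_mul, Real.log_mul (by exact_mod_cast hK.ne') (by exact_mod_cast hbpos.ne')]
          at h1
      calc u n ≤ ENNReal.ofReal ((Real.log K + Real.log (growthFn k T Y n)) / Real.log n) := by
            apply ENNReal.ofReal_le_ofReal
            gcongr
        _ ≤ w n + v n := by
            rw [add_div]
            exact ENNReal.ofReal_add_le
  refine ENNReal.le_of_forall_pos_le_add fun ε hε htop => ?_
  have hε2 : (0 : ℝ≥0∞) < (ε / 2 : ℝ≥0) := by
    exact_mod_cast half_pos hε
  have h1 : ∀ᶠ n in Filter.atTop, w n < (ε / 2 : ℝ≥0) := hw0.eventually (gt_mem_nhds hε2)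
  have h2 : ∀ᶠ n in Filter.atTop,
      v n < Filter.limsup v Filter.atTop + (ε / 2 : ℝ≥0) :=
    Filter.eventually_lt_of_limsup_lt (ENNReal.lt_add_right htop.ne hε2.ne')
  refine Filter.limsup_le_of_le (by isBoundedDefault) ?_
  filter_upwards [hev, h1, h2] with n hun h1n h2n
  calc u n ≤ w n + v n := hun
    _ ≤ (ε / 2 : ℝ≥0) + (Filter.limsup v Filter.atTop + (ε / 2 : ℝ≥0)) :=
        add_le_add h1n.le h2n.le
    _ = Filter.limsup v Filter.atTop + ε := by
        rw [← add_assoc, add_comm ((ε / 2 : ℝ≥0) : ℝ≥0∞), add_assoc, ← ENNReal.coe_add,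
          add_halves]

end GK

/-- Lemma 2.1(b): a `k`-algebra is growth equivalent to any subalgebra over which it is
module-finite; in particular they have the same GK dimension. -/
theorem stmt8 (k : Type*) [Field k] (S : Type*) [Ring S] [Algebra k S]
    (T : Subalgebra k S) (hfin : Module.Finite T S) :
    growthEquiv k S T ∧ gkDim k S = gkDim k T := by
  have h1 : growthLE k S T := growthLE_of_moduleFinite T hfin
  have h2 : growthLE k T S := growthLE_of_subalgebra T
  exact ⟨⟨h1, h2⟩, le_antisymm (gkDim_le_of_growthLE h1) (gkDim_le_of_growthLE h2)⟩
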